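/- Ando joint concavity (two-factor, equal exponents case): for r₁, r₂ > 0 with r₁ + r₂ ≤ 1, the map (X,Y) ↦ X^{r₁} ⊗ Y^{r₂} is jointly concave on pairs of positive semidefinite operators on finite-dimensional Hilbert spaces: if X = ∑_α λ_α X_α and Y = ∑_α λ_α Y_α with λ_α ≥ 0, ∑_α λ_α = 1, and all X_α, Y_α positive semidefinite, then ∑_α λ_α (X_α^{r₁} ⊗ Y_α^{r₂}) ≤ X^{r₁} ⊗ Y^{r₂} in the Loewner order. -/

import Mathlib

set_option linter.unusedSectionVars false
set_option maxHeartbeats 1000000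
open scoped ComplexOrder Kronecker
open Matrix Filter Topology

namespace Matrix.PosSemidef
open scoped MatrixOrder
variable {n : Type*} [Fintype n] [DecidableEq n] {A : Matrix n n ℂ}

noncomputable def sqrt (_hA : A.PosSemidef) : Matrix n n ℂ := CFC.sqrt A

lemma posSemidef_sqrt (hA : A.PosSemidef) : hA.sqrt.PosSemidef :=
  (CFC.sqrt_nonneg A).posSemidef

lemma sq_sqrt (hA : A.PosSemidef) : hA.sqrt ^ 2 = A := CFC.sq_sqrt A hA.nonneg

lemma sqrt_mul_self (hA : A.PosSemidef) : hA.sqrt * hA.sqrt = A :=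
  CFC.sqrt_mul_sqrt_self A hA.nonneg

lemma eq_sqrt_of_sq_eq {B : Matrix n n ℂ} (hB : B.PosSemidef) (hA : A.PosSemidef)
    (h : B ^ 2 = A) : B = hA.sqrt :=
  ((CFC.sqrt_eq_iff A B hA.nonneg hB.nonneg).2 (by rw [← h, sq])).symm

end Matrix.PosSemidef

namespace Ando



variable {k : Type*} [Fintype k] [DecidableEq k]

/-- conjugated diagonal matrix -/
noncomputable def cd (U : Matrix k k ℂ) (μ : k → ℝ) : Matrix k k ℂ :=
  U * Matrix.diagonal (fun i => (μ i : ℂ)) * star U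

lemma star_diag_real (μ : k → ℝ) :
    star (Matrix.diagonal (fun i => (μ i : ℂ))) = Matrix.diagonal (fun i => (μ i : ℂ)) := by
  rw [Matrix.star_eq_conjTranspose, Matrix.diagonal_conjTranspose]
  congr 1
  ext i
  simp [Pi.star_def]

lemma cd_herm (U : Matrix k k ℂ) (μ : k → ℝ) : (cd U μ).IsHermitian := by
  unfold cd Matrix.IsHermitian
  rw [← Matrix.star_eq_conjTranspose]
  simp only [StarMul.star_mul, star_star, star_diag_real, Matrix.mul_assoc]

lemma cd_mul (U : Matrix k k ℂ) (hU' : star U * U = 1) (μ ν : k → ℝ) :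
    cd U μ * cd U ν = cd U (fun i => μ i * ν i) := by
  unfold cd
  rw [show U * diagonal (fun i => (μ i : ℂ)) * star U * (U * diagonal (fun i => (ν i : ℂ)) * star U)
      = U * (diagonal (fun i => (μ i : ℂ)) * (star U * U) * diagonal (fun i => (ν i : ℂ))) * star U by
    simp only [Matrix.mul_assoc], hU', mul_one, diagonal_mul_diagonal]
  norm_cast

lemma cd_one (U : Matrix k k ℂ) (hU : U * star U = 1) : cd U (fun _ => 1) = 1 := by
  unfold cd
  simp only [Complex.ofReal_one, diagonal_one, mul_one, hU]

lemma cd_add (U : Matrix k k ℂ) (μ ν : k → ℝ) :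
    cd U μ + cd U ν = cd U (fun i => μ i + ν i) := by
  unfold cd
  rw [← add_mul, ← mul_add, diagonal_add]
  norm_cast

lemma cd_sub (U : Matrix k k ℂ) (μ ν : k → ℝ) :
    cd U μ - cd U ν = cd U (fun i => μ i - ν i) := by
  unfold cd
  rw [← sub_mul, ← mul_sub, diagonal_sub]
  norm_cast

lemma cd_psd (U : Matrix k k ℂ) (μ : k → ℝ) (hμ : ∀ i, 0 ≤ μ i) : (cd U μ).PosSemidef := by
  have h : cd U μ = (Matrix.diagonal (fun i => (Real.sqrt (μ i) : ℂ)) * star U)ᴴ *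
      (Matrix.diagonal (fun i => (Real.sqrt (μ i) : ℂ)) * star U) := by
    rw [Matrix.conjTranspose_mul, ← Matrix.star_eq_conjTranspose (Matrix.diagonal _),
      star_diag_real, ← Matrix.star_eq_conjTranspose, star_star]
    unfold cd
    simp only [Matrix.mul_assoc]
    congr 1
    rw [← Matrix.mul_assoc, diagonal_mul_diagonal,
      show (fun i => (Real.sqrt (μ i) : ℂ) * (Real.sqrt (μ i) : ℂ)) = fun i => (μ i : ℂ) from
        funext fun i => by rw [← Complex.ofReal_mul, Real.mul_self_sqrt (hμ i)]]
  rw [h]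
  exact Matrix.posSemidef_conjTranspose_mul_self _

lemma cd_le (U : Matrix k k ℂ) (μ ν : k → ℝ) (h : ∀ i, μ i ≤ ν i) :
    (cd U ν - cd U μ).PosSemidef := by
  rw [cd_sub]
  exact cd_psd U _ (fun i => sub_nonneg.2 (h i))

lemma cd_apply (U : Matrix k k ℂ) (μ : k → ℝ) (i j : k) :
    cd U μ i j = ∑ l, U i l * (μ l : ℂ) * (starRingEnd ℂ) (U j l) := by
  unfold cd
  rw [Matrix.mul_apply]
  congr 1
  ext l
  rw [Matrix.mul_apply]
  rw [Finset.sum_mul]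
  rw [Finset.sum_eq_single l]
  · simp [Matrix.diagonal, Matrix.star_eq_conjTranspose, Matrix.conjTranspose_apply]
  · intro b _ hb
    rw [Matrix.diagonal_apply_ne _ hb]
    ring
  · simp




/-- quadratic form -/
noncomputable def qf (M : Matrix k k ℂ) (x y : k → ℂ) : ℂ := dotProduct (star x) (M *ᵥ y)

lemma star_mulVec_dotProduct (M : Matrix k k ℂ) (x w : k → ℂ) :
    dotProduct (star (M *ᵥ x)) w = dotProduct (star x) (Mᴴ *ᵥ w) := by
  rw [Matrix.star_mulVec, Matrix.dotProduct_mulVec]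

lemma dotProduct_star_self_nonneg' (z : k → ℂ) : 0 ≤ dotProduct (star z) z := by
  refine Finset.sum_nonneg fun i _ => ?_
  simp only [Pi.star_apply]
  rw [Complex.star_def, mul_comm, Complex.mul_conj]
  exact_mod_cast Complex.normSq_nonneg _

lemma herm_smul {M : Matrix k k ℂ} (hM : M.IsHermitian) (w : ℝ) : (w • M).IsHermitian := by
  show (w • M)ᴴ = w • M
  rw [Matrix.conjTranspose_smul, star_trivial, hM.eq]

lemma psd_smul {M : Matrix k k ℂ} (hM : M.PosSemidef) {w : ℝ} (hw : 0 ≤ w) :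
    (w • M).PosSemidef := by
  refine Matrix.PosSemidef.of_dotProduct_mulVec_nonneg (herm_smul hM.1 w) fun x => ?_
  have := hM.dotProduct_mulVec_nonneg x
  rw [Matrix.smul_mulVec, dotProduct_smul]
  rw [Complex.real_smul]
  exact mul_nonneg (by exact_mod_cast hw) this

lemma psd_sum {ι : Type*} [Fintype ι] (f : ι → Matrix k k ℂ)
    (h : ∀ a, (f a).PosSemidef) : (∑ a, f a).PosSemidef := by
  classical
  exact Finset.sum_induction f _ (fun a b ha hb => ha.add hb) Matrix.PosSemidef.zero
    (fun a _ => h a)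

lemma sum_mulVec' {ι : Type*} [Fintype ι] (f : ι → Matrix k k ℂ) (y : k → ℂ) :
    (∑ a, f a) *ᵥ y = ∑ a, f a *ᵥ y := by
  ext i
  simp only [Matrix.mulVec, dotProduct, Matrix.sum_apply, Finset.sum_apply, Finset.sum_apply',
    Finset.sum_mul]
  rw [Finset.sum_comm]

lemma qf_nonneg_of_psd {M : Matrix k k ℂ} (hM : M.PosSemidef) (x : k → ℂ) : 0 ≤ qf M x x := hM.dotProduct_mulVec_nonneg x

lemma qf_add (M N : Matrix k k ℂ) (x y : k → ℂ) : qf (M + N) x y = qf M x y + qf N x y := by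
  unfold qf
  rw [Matrix.add_mulVec, dotProduct_add]

lemma qf_sub (M N : Matrix k k ℂ) (x y : k → ℂ) : qf (M - N) x y = qf M x y - qf N x y := by
  unfold qf
  rw [Matrix.sub_mulVec, dotProduct_sub]

lemma qf_smul (w : ℝ) (M : Matrix k k ℂ) (x y : k → ℂ) : qf (w • M) x y = w • qf M x y := by
  unfold qf
  rw [Matrix.smul_mulVec, dotProduct_smul]

lemma qf_sum {ι : Type*} [Fintype ι] (f : ι → Matrix k k ℂ) (x y : k → ℂ) :
    qf (∑ a, f a) x y = ∑ a, qf (f a) x y := by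
  unfold qf
  rw [sum_mulVec']
  simp only [dotProduct, Finset.sum_apply, Finset.mul_sum]
  rw [Finset.sum_comm]

lemma qf_mul (M N : Matrix k k ℂ) (x y : k → ℂ) : qf (M * N) x y = qf M x (N *ᵥ y) := by
  unfold qf
  rw [← Matrix.mulVec_mulVec]

/-- expansion producing the block-positivity of [[R², RS],[SR, S²]] for hermitian R S -/
lemma qf_expand {R S : Matrix k k ℂ} (hR : R.IsHermitian) (hS : S.IsHermitian) (x y : k → ℂ) :
    0 ≤ qf (R * R) x x + qf (R * S) x y + qf (S * R) y x + qf (S * S) y y := by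
  have key : qf (R * R) x x + qf (R * S) x y + qf (S * R) y x + qf (S * S) y y
      = dotProduct (star (R *ᵥ x + S *ᵥ y)) (R *ᵥ x + S *ᵥ y) := by
    simp only [star_add, add_dotProduct, dotProduct_add,
      star_mulVec_dotProduct, hR.eq, hS.eq]
    unfold qf
    simp only [Matrix.mulVec_mulVec]
    ring
  rw [key]
  exact dotProduct_star_self_nonneg' _

variable {k : Type*} [Fintype k] [DecidableEq k]




lemma cd_factor (U : Matrix k k ℂ) (μ : k → ℝ) (hμ : ∀ i, 0 ≤ μ i) :
    cd U μ = (Matrix.diagonal (fun i => (Real.sqrt (μ i) : ℂ)) * star U)ᴴ *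
      (Matrix.diagonal (fun i => (Real.sqrt (μ i) : ℂ)) * star U) := by
  rw [Matrix.conjTranspose_mul, ← Matrix.star_eq_conjTranspose (Matrix.diagonal _),
    star_diag_real, ← Matrix.star_eq_conjTranspose, star_star]
  unfold cd
  simp only [Matrix.mul_assoc]
  congr 1
  rw [← Matrix.mul_assoc, diagonal_mul_diagonal,
    show (fun i => (Real.sqrt (μ i) : ℂ) * (Real.sqrt (μ i) : ℂ)) = fun i => (μ i : ℂ) from
      funext fun i => by rw [← Complex.ofReal_mul, Real.mul_self_sqrt (hμ i)]]

noncomputable def evU {L : Matrix k k ℂ} (hL : L.IsHermitian) : Matrix k k ℂ :=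
  (Matrix.IsHermitian.eigenvectorUnitary hL : Matrix k k ℂ)

lemma evU_mul_star {L : Matrix k k ℂ} (hL : L.IsHermitian) : evU hL * star (evU hL) = 1 :=
  (Matrix.mem_unitaryGroup_iff).mp (Matrix.IsHermitian.eigenvectorUnitary hL).2

lemma star_mul_evU {L : Matrix k k ℂ} (hL : L.IsHermitian) : star (evU hL) * evU hL = 1 :=
  (Matrix.mem_unitaryGroup_iff').mp (Matrix.IsHermitian.eigenvectorUnitary hL).2

lemma herm_eq_cd {L : Matrix k k ℂ} (hL : L.IsHermitian) : L = cd (evU hL) hL.eigenvalues := by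
  conv_lhs => rw [hL.spectral_theorem]
  rfl

lemma cfc_eq_cd {L : Matrix k k ℂ} (hL : L.IsHermitian) (f : ℝ → ℝ) :
    hL.cfc f = cd (evU hL) (f ∘ hL.eigenvalues) := rfl

lemma cd_sqrt (U : Matrix k k ℂ) (hU' : star U * U = 1) (μ : k → ℝ) (hμ : ∀ i, 0 ≤ μ i) :
    (cd_psd U μ hμ).sqrt = cd U (fun i => Real.sqrt (μ i)) := by
  refine ((cd_psd U _ (fun i => Real.sqrt_nonneg (μ i))).eq_sqrt_of_sq_eq (cd_psd U μ hμ) ?_).symm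
  rw [pow_two, cd_mul U hU',
    show (fun i => Real.sqrt (μ i) * Real.sqrt (μ i)) = μ from
      funext fun i => Real.mul_self_sqrt (hμ i)]

lemma cd_posdef (U : Matrix k k ℂ) (hU : U * star U = 1) (μ : k → ℝ) (hμ : ∀ i, 0 < μ i) :
    (cd U μ).PosDef := by
  refine Matrix.PosDef.of_dotProduct_mulVec_pos (cd_psd U μ fun i => (hμ i).le).1 fun x hx => ?_
  set B : Matrix k k ℂ := Matrix.diagonal (fun i => (Real.sqrt (μ i) : ℂ)) * star U with hB
  have hfact : cd U μ = Bᴴ * B := cd_factor U μ fun i => (hμ i).le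
  have hBx : B *ᵥ x ≠ 0 := by
    intro h0
    apply hx
    have h1 : star U *ᵥ x = 0 := by
      funext i
      have h2 := congrFun h0 i
      rw [hB, ← Matrix.mulVec_mulVec] at h2
      have h3 : (Real.sqrt (μ i) : ℂ) * (star U *ᵥ x) i = 0 := by
        simpa [Matrix.mulVec_diagonal] using h2
      have h4 : (Real.sqrt (μ i) : ℂ) ≠ 0 := by
        simp only [ne_eq, Complex.ofReal_eq_zero]
        exact (Real.sqrt_pos.mpr (hμ i)).ne'
      simpa [h4] using h3
    have h5 := congrArg (fun v => U *ᵥ v) h1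
    simpa [Matrix.mulVec_mulVec, hU] using h5
  calc (0:ℂ) < dotProduct (star (B *ᵥ x)) (B *ᵥ x) :=
        Matrix.dotProduct_star_self_pos_iff.mpr hBx
    _ = dotProduct (star x) (cd U μ *ᵥ x) := by
        rw [star_mulVec_dotProduct, Matrix.mulVec_mulVec, ← hfact]


variable {k : Type*} [Fintype k] [DecidableEq k]



/-- operator monotonicity of the square root -/
lemma sqrt_mono {A B : Matrix k k ℂ} (hA : A.PosSemidef) (hB : B.PosDef)
    (hAB : (B - A).PosSemidef) : (hB.posSemidef.sqrt - hA.sqrt).PosSemidef := by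
  set SA := hA.sqrt with hSA
  set SB := hB.posSemidef.sqrt with hSB
  set T := SB - SA with hT'
  have hTh : T.IsHermitian := hB.posSemidef.posSemidef_sqrt.1.sub hA.posSemidef_sqrt.1
  refine hTh.posSemidef_iff_eigenvalues_nonneg.mpr fun i => ?_
  change 0 ≤ hTh.eigenvalues i
  set t := hTh.eigenvalues i with ht
  set v : k → ℂ := ⇑(hTh.eigenvectorBasis i) with hv
  have hvv : T *ᵥ v = t • v := hTh.mulVec_eigenvectorBasis i
  have hv0 : v ≠ 0 := by
    intro h0
    exact hTh.eigenvectorBasis.orthonormal.ne_zero i (WithLp.ofLp_injective _ (by exact h0))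
  -- identity B - A = SB * T + T * SA
  have hid : SB * T + T * SA = B - A := by
    rw [hT', mul_sub, sub_mul, ← pow_two, ← pow_two, hB.posSemidef.sq_sqrt, hA.sq_sqrt]
    abel
  -- main inequality
  have h1 : 0 ≤ dotProduct (star v) ((B - A) *ᵥ v) := hAB.dotProduct_mulVec_nonneg v
  have e1 : dotProduct (star v) ((SB * T) *ᵥ v)
      = t • dotProduct (star v) (SB *ᵥ v) := by
    rw [← Matrix.mulVec_mulVec, hvv, Matrix.mulVec_smul, dotProduct_smul]
  have e2 : dotProduct (star v) ((T * SA) *ᵥ v)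
      = t • dotProduct (star v) (SA *ᵥ v) := by
    rw [← Matrix.mulVec_mulVec, ← hTh.eq, ← star_mulVec_dotProduct, hvv, star_smul,
      star_trivial, smul_dotProduct]
  have h2 : 0 ≤ t • (dotProduct (star v) (SB *ᵥ v)
      + dotProduct (star v) (SA *ᵥ v)) := by
    rw [smul_add, ← e1, ← e2, ← dotProduct_add, ← Matrix.add_mulVec, hid]
    exact h1
  -- positivity of the scalar factor
  have hSBpsd : SB.PosSemidef := hB.posSemidef.posSemidef_sqrt
  have hSApsd : SA.PosSemidef := hA.posSemidef_sqrt
  have hb0 : 0 < (dotProduct (star v) (SB *ᵥ v)).re := by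
    have hnn := hSBpsd.dotProduct_mulVec_nonneg v
    rcases lt_or_eq_of_le (Complex.nonneg_iff.mp hnn).1 with h | h
    · exact h
    · exfalso
      have hz : dotProduct (star v) (SB *ᵥ v) = 0 :=
        Complex.ext h.symm (Complex.nonneg_iff.mp hnn).2.symm
      have hSBv : SB *ᵥ v = 0 := (hSBpsd.dotProduct_mulVec_zero_iff v).mp hz
      have hBv : B *ᵥ v = 0 := by
        rw [← hB.posSemidef.sqrt_mul_self, ← Matrix.mulVec_mulVec, hSBv, Matrix.mulVec_zero]
      have := hB.re_dotProduct_pos hv0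
      rw [hBv, dotProduct_zero] at this
      simp at this
  have ha0 : 0 ≤ (dotProduct (star v) (SA *ᵥ v)).re :=
    (Complex.nonneg_iff.mp (hSApsd.dotProduct_mulVec_nonneg v)).1
  have hs : 0 < (dotProduct (star v) (SB *ᵥ v)
      + dotProduct (star v) (SA *ᵥ v)).re := by
    rw [Complex.add_re]; linarith
  have h3 : 0 ≤ t * (dotProduct (star v) (SB *ᵥ v)
      + dotProduct (star v) (SA *ᵥ v)).re := by
    have := (Complex.nonneg_iff.mp h2).1
    rwa [Complex.real_smul, Complex.re_ofReal_mul] at this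
  by_contra hneg
  push_neg at hneg
  nlinarith

/-- PSD is closed under entrywise limits -/
lemma psd_limit (M : ℕ → Matrix k k ℂ) (M' : Matrix k k ℂ)
    (hp : ∀ s, (M s).PosSemidef)
    (hconv : ∀ i j, Tendsto (fun s => M s i j) atTop (𝓝 (M' i j))) : M'.PosSemidef := by
  refine Matrix.PosSemidef.of_dotProduct_mulVec_nonneg ?_ ?_
  · ext i j
    have h1 : Tendsto (fun s => (M s) i j) atTop (𝓝 (M'ᴴ i j)) := by
      have h2 : Tendsto (fun s => (starRingEnd ℂ) ((M s) j i)) atTop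
          (𝓝 ((starRingEnd ℂ) (M' j i))) := (Complex.continuous_conj.tendsto _).comp (hconv j i)
      simp only [Matrix.conjTranspose_apply]
      convert h2 using 2 with s
      have := congrFun (congrFun (hp s).1.eq i) j
      rw [← this]
      rfl
      rfl
    exact tendsto_nhds_unique h1 (hconv i j)
  · intro x
    set z : ℕ → ℂ := fun s => dotProduct (star x) (M s *ᵥ x) with hz
    have hztend : Tendsto z atTop (𝓝 (dotProduct (star x) (M' *ᵥ x))) := by
      simp only [hz, dotProduct, Matrix.mulVec]
      apply tendsto_finset_sum
      intro i _
      apply Tendsto.mul tendsto_const_nhds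
      apply tendsto_finset_sum
      intro j _
      exact Tendsto.mul (hconv i j) tendsto_const_nhds
    rw [Complex.nonneg_iff]
    constructor
    · refine ge_of_tendsto' ((Complex.continuous_re.tendsto _).comp hztend) fun s => ?_
      exact (Complex.nonneg_iff.mp ((hp s).dotProduct_mulVec_nonneg x)).1
    · refine tendsto_nhds_unique ?_ ((Complex.continuous_im.tendsto _).comp hztend)
      have : ∀ s, (z s).im = 0 := fun s => ((Complex.nonneg_iff.mp ((hp s).dotProduct_mulVec_nonneg x)).2).symm
      simp only [Function.comp_def, this]
      exact tendsto_const_nhds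
  

-- key lemma: to be appended to master


lemma cd_congr (U : Matrix k k ℂ) {μ ν : k → ℝ} (h : ∀ i, μ i = ν i) : cd U μ = cd U ν := by
  have : μ = ν := funext h
  rw [this]

lemma qf_neg_left (M : Matrix k k ℂ) (x y : k → ℂ) : qf M (-x) y = -qf M x y := by
  unfold qf
  rw [star_neg, neg_dotProduct]

lemma qf_neg_right (M : Matrix k k ℂ) (x y : k → ℂ) : qf M x (-y) = -qf M x y := by
  unfold qf
  rw [Matrix.mulVec_neg, dotProduct_neg]

lemma qf_herm_shift {H : Matrix k k ℂ} (hH : H.IsHermitian) (A : Matrix k k ℂ) (z w : k → ℂ) :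
    qf A (H *ᵥ z) w = qf (H * A) z w := by
  unfold qf
  rw [star_mulVec_dotProduct, hH.eq, Matrix.mulVec_mulVec]

lemma qf_mulVec_right (M N : Matrix k k ℂ) (x z : k → ℂ) :
    qf M x (N *ᵥ z) = qf (M * N) x z := by
  unfold qf
  rw [Matrix.mulVec_mulVec]

lemma le_abs {L : Matrix k k ℂ} (hL : L.IsHermitian) (hLL : (L * L).PosSemidef) :
    (hLL.sqrt - L).PosSemidef := by
  have hW' : star (evU hL) * evU hL = 1 := star_mul_evU hL
  have h2 : (cd (evU hL) (fun i => |hL.eigenvalues i|)) ^ 2 = L * L := by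
    calc (cd (evU hL) (fun i => |hL.eigenvalues i|)) ^ 2
        = cd (evU hL) (fun i => |hL.eigenvalues i| * |hL.eigenvalues i|) := by
          rw [pow_two, cd_mul _ hW']
      _ = cd (evU hL) (fun i => hL.eigenvalues i * hL.eigenvalues i) :=
          cd_congr _ fun i => abs_mul_abs_self _
      _ = cd (evU hL) hL.eigenvalues * cd (evU hL) hL.eigenvalues := (cd_mul _ hW' _ _).symm
      _ = L * L := by rw [← herm_eq_cd hL]
  have h3 : cd (evU hL) (fun i => |hL.eigenvalues i|) = hLL.sqrt :=
    (cd_psd _ _ fun i => abs_nonneg _).eq_sqrt_of_sq_eq hLL h2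
  have h4 := cd_le (evU hL) hL.eigenvalues (fun i => |hL.eigenvalues i|)
    (fun i => le_abs_self _)
  rw [← herm_eq_cd hL] at h4
  rw [← h3]
  exact h4

lemma key_eps (U : Matrix k k ℂ) (hU : U * star U = 1) (hU' : star U * U = 1)
    (c d : k → ℝ) (hc : ∀ i, 0 ≤ c i) (hd : ∀ i, 0 ≤ d i)
    (K : Matrix k k ℂ) (hK : K.IsHermitian)
    (hP : ∀ x y, 0 ≤ qf (cd U c) x x + qf K x y + qf K y x + qf (cd U d) y y)
    (ε : ℝ) (hε : 0 < ε) :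
    (cd U (fun i => Real.sqrt (c i + ε) * Real.sqrt (d i + ε)) - K).PosSemidef := by
  set cε : k → ℝ := fun i => c i + ε with hcε
  set dε : k → ℝ := fun i => d i + ε with hdε
  have hcε0 : ∀ i, 0 < cε i := fun i => add_pos_of_nonneg_of_pos (hc i) hε
  have hdε0 : ∀ i, 0 < dε i := fun i => add_pos_of_nonneg_of_pos (hd i) hε
  -- perturbed positivity
  have hPε : ∀ x y, 0 ≤ qf (cd U cε) x x + qf K x y + qf K y x + qf (cd U dε) y y := by
    intro x y
    have h1 : cd U cε = cd U c + cd U (fun _ => ε) := by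
      rw [cd_add]
    have h2 : cd U dε = cd U d + cd U (fun _ => ε) := by
      rw [cd_add]
    rw [h1, h2, qf_add, qf_add]
    have e1 := qf_nonneg_of_psd (cd_psd U (fun _ => ε) (fun _ => hε.le)) x
    have e2 := qf_nonneg_of_psd (cd_psd U (fun _ => ε) (fun _ => hε.le)) y
    have := hP x y
    calc (0:ℂ) ≤ (qf (cd U c) x x + qf K x y + qf K y x + qf (cd U d) y y)
          + qf (cd U (fun _ => ε)) x x + qf (cd U (fun _ => ε)) y y := by
          refine add_nonneg (add_nonneg this e1) e2
      _ = qf (cd U c) x x + qf (cd U (fun _ => ε)) x x + qf K x y + qf K y x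
          + (qf (cd U d) y y + qf (cd U (fun _ => ε)) y y) := by ring
  set Cinv : Matrix k k ℂ := cd U (fun i => (cε i)⁻¹) with hCinv
  have hCinvH : Cinv.IsHermitian := cd_herm U _
  -- Schur complement positivity
  have hM : (cd U dε - K * Cinv * K).PosSemidef := by
    refine Matrix.PosSemidef.of_dotProduct_mulVec_nonneg ?_ ?_
    · refine ((cd_herm U dε).sub ?_)
      show (K * Cinv * K)ᴴ = K * Cinv * K
      rw [Matrix.conjTranspose_mul, Matrix.conjTranspose_mul, hK.eq, hCinvH.eq, Matrix.mul_assoc]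
    · intro y
      have h := hPε (-(Cinv *ᵥ (K *ᵥ y))) y
      set z : k → ℂ := K *ᵥ y with hz
      have t1 : qf (cd U cε) (-(Cinv *ᵥ z)) (-(Cinv *ᵥ z)) = qf (K * Cinv * K) y y := by
        rw [qf_neg_left, qf_neg_right, neg_neg, qf_herm_shift hCinvH, qf_mulVec_right,
          show Cinv * cd U cε * Cinv = Cinv from by
            rw [hCinv, cd_mul U hU', cd_mul U hU']
            exact cd_congr U fun i => by
              field_simp]
        rw [hz, qf_herm_shift hK, qf_mulVec_right]
      have t2 : qf K (-(Cinv *ᵥ z)) y = -qf (K * Cinv * K) y y := by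
        rw [qf_neg_left, qf_herm_shift hCinvH, hz, qf_herm_shift hK, ← Matrix.mul_assoc]
      have t3 : qf K y (-(Cinv *ᵥ z)) = -qf (K * Cinv * K) y y := by
        rw [qf_neg_right, qf_mulVec_right, hz, qf_mulVec_right]
      rw [t1, t2, t3] at h
      show 0 ≤ dotProduct (star y) ((cd U dε - K * Cinv * K) *ᵥ y)
      calc (0:ℂ) ≤ qf (K * Cinv * K) y y + -qf (K * Cinv * K) y y + -qf (K * Cinv * K) y y
            + qf (cd U dε) y y := h
        _ = qf (cd U dε) y y - qf (K * Cinv * K) y y := by ring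
        _ = qf (cd U dε - K * Cinv * K) y y := (qf_sub _ _ y y).symm
        _ = _ := rfl
  -- now extract K ≤ Cε^{1/2} Dε^{1/2}
  set Sm : Matrix k k ℂ := cd U (fun i => (Real.sqrt (cε i))⁻¹) with hSm
  set Sp : Matrix k k ℂ := cd U (fun i => Real.sqrt (cε i)) with hSp
  have hSmH : Sm.IsHermitian := cd_herm U _
  have hSpH : Sp.IsHermitian := cd_herm U _
  set L : Matrix k k ℂ := Sm * K * Sm with hL
  have hLH : L.IsHermitian := by
    show (Sm * K * Sm)ᴴ = Sm * K * Sm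
    rw [Matrix.conjTranspose_mul, Matrix.conjTranspose_mul, hK.eq, hSmH.eq, Matrix.mul_assoc]
  set N : Matrix k k ℂ := cd U (fun i => dε i / cε i) with hN
  have hSmSm : Sm * Sm = Cinv := by
    rw [hSm, cd_mul U hU', hCinv]
    exact cd_congr U fun i => by
      rw [← mul_inv, Real.mul_self_sqrt (hcε0 i).le]
  have hLL : L * L = Sm * (K * Cinv * K) * Sm := by
    rw [hL]
    calc Sm * K * Sm * (Sm * K * Sm) = Sm * K * (Sm * Sm) * K * Sm := by
          simp only [Matrix.mul_assoc]
      _ = _ := by rw [hSmSm]; simp only [Matrix.mul_assoc]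
  have hNL : (N - L * L).PosSemidef := by
    have h1 : N - L * L = Sm * (cd U dε - K * Cinv * K) * Sm := by
      rw [Matrix.mul_sub, Matrix.sub_mul, hLL]
      congr 1
      rw [hSm, hN, cd_mul U hU', cd_mul U hU']
      exact (cd_congr U fun i => by
        rw [show (Real.sqrt (cε i))⁻¹ * dε i * (Real.sqrt (cε i))⁻¹
            = dε i * (Real.sqrt (cε i) * Real.sqrt (cε i))⁻¹ from by
          rw [mul_inv]; ring]
        rw [Real.mul_self_sqrt (hcε0 i).le, div_eq_mul_inv]).symm
    rw [h1]
    have := hM.conjTranspose_mul_mul_same Sm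
    rwa [hSmH.eq] at this
  have hL2psd : (L * L).PosSemidef := by
    have : L * L = Lᴴ * L := by rw [hLH.eq]
    rw [this]
    exact Matrix.posSemidef_conjTranspose_mul_self L
  have hNpd : N.PosDef := cd_posdef U hU _ (fun i => div_pos (hdε0 i) (hcε0 i))
  have habs : (hL2psd.sqrt - L).PosSemidef := le_abs hLH hL2psd
  have hmono : (hNpd.posSemidef.sqrt - hL2psd.sqrt).PosSemidef :=
    sqrt_mono hL2psd hNpd (by
      have := hNL
      exact this)
  have hchain : (hNpd.posSemidef.sqrt - L).PosSemidef := by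
    have := hmono.add habs
    rwa [sub_add_sub_cancel] at this
  have hNsqrt : hNpd.posSemidef.sqrt = cd U (fun i => Real.sqrt (dε i / cε i)) :=
    cd_sqrt U hU' _ (fun i => (div_pos (hdε0 i) (hcε0 i)).le)
  rw [hNsqrt] at hchain
  -- conjugate by Sp
  have hfinal := hchain.conjTranspose_mul_mul_same Sp
  rw [hSpH.eq] at hfinal
  have heq : Sp * (cd U (fun i => Real.sqrt (dε i / cε i)) - L) * Sp
      = cd U (fun i => Real.sqrt (c i + ε) * Real.sqrt (d i + ε)) - K := by
    rw [Matrix.mul_sub, Matrix.sub_mul]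
    refine congrArg₂ (· - ·) ?_ ?_
    · rw [hSp, cd_mul U hU', cd_mul U hU']
      exact cd_congr U fun i => by
        have hne : Real.sqrt (cε i) ≠ 0 := (Real.sqrt_pos.mpr (hcε0 i)).ne'
        rw [Real.sqrt_div (hdε0 i).le]
        show Real.sqrt (cε i) * (Real.sqrt (dε i) / Real.sqrt (cε i)) * Real.sqrt (cε i)
            = Real.sqrt (cε i) * Real.sqrt (dε i)
        field_simp
    · rw [hL]
      calc Sp * (Sm * K * Sm) * Sp = (Sp * Sm) * K * (Sm * Sp) := by
            simp only [Matrix.mul_assoc]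
        _ = K := by
            have h1 : Sp * Sm = 1 := by
              rw [hSp, hSm, cd_mul U hU']
              rw [show (fun i => Real.sqrt (cε i) * (Real.sqrt (cε i))⁻¹) = fun _ => (1:ℝ) from
                funext fun i => mul_inv_cancel₀ (Real.sqrt_pos.mpr (hcε0 i)).ne']
              exact cd_one U hU
            have h2 : Sm * Sp = 1 := by
              rw [hSp, hSm, cd_mul U hU']
              rw [show (fun i => (Real.sqrt (cε i))⁻¹ * Real.sqrt (cε i)) = fun _ => (1:ℝ) from
                funext fun i => inv_mul_cancel₀ (Real.sqrt_pos.mpr (hcε0 i)).ne']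
              exact cd_one U hU
            rw [h1, h2, Matrix.one_mul, Matrix.mul_one]
  rw [heq] at hfinal
  exact hfinal


lemma key (U : Matrix k k ℂ) (hU : U * star U = 1) (hU' : star U * U = 1)
    (c d : k → ℝ) (hc : ∀ i, 0 ≤ c i) (hd : ∀ i, 0 ≤ d i)
    (K : Matrix k k ℂ) (hK : K.IsHermitian)
    (hP : ∀ x y, 0 ≤ qf (cd U c) x x + qf K x y + qf K y x + qf (cd U d) y y) :
    (cd U (fun i => Real.sqrt (c i) * Real.sqrt (d i)) - K).PosSemidef := by
  apply psd_limit (fun s : ℕ =>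
    cd U (fun i => Real.sqrt (c i + 1/(s+1)) * Real.sqrt (d i + 1/(s+1))) - K)
  · intro s
    exact key_eps U hU hU' c d hc hd K hK hP (1/(s+1)) (by positivity)
  · intro i j
    simp only [Matrix.sub_apply]
    apply Tendsto.sub _ tendsto_const_nhds
    simp only [cd_apply]
    apply tendsto_finset_sum
    intro l _
    apply Tendsto.mul _ tendsto_const_nhds
    apply Tendsto.mul tendsto_const_nhds
    have base : ∀ (a : ℝ), Tendsto (fun s : ℕ => Real.sqrt (a + 1/(s+1))) atTop
        (𝓝 (Real.sqrt a)) := by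
      intro a
      have h1 : Tendsto (fun s : ℕ => a + 1/(s+1)) atTop (𝓝 a) := by
        have h0 : Tendsto (fun s : ℕ => (1:ℝ)/(s+1)) atTop (𝓝 0) :=
          tendsto_one_div_add_atTop_nhds_zero_nat
        have h2 := (tendsto_const_nhds (x := a) (f := (atTop : Filter ℕ))).add h0
        rwa [add_zero] at h2
      exact (Real.continuous_sqrt.tendsto _).comp h1
    have h3 := ((base (c l)).mul (base (d l)))
    exact (Complex.continuous_ofReal.tendsto _).comp h3
lemma mid_abstract {ι : Type*} [Fintype ι]
    (w : ι → ℝ) (hw : ∀ a, 0 ≤ w a)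
    (W : ι → Matrix k k ℂ) (hW' : ∀ a, star (W a) * W a = 1)
    (Wb : Matrix k k ℂ) (hWb : Wb * star Wb = 1) (hWb' : star Wb * Wb = 1)
    (e : ι → ℝ → ℝ → k → ℝ) (eb : ℝ → ℝ → k → ℝ)
    (hmul : ∀ a i (p q p' q' : ℝ), 0 ≤ p → 0 ≤ q → 0 ≤ p' → 0 ≤ q' →
      e a p q i * e a p' q' i = e a (p+p') (q+q') i)
    (hnn : ∀ a (p q : ℝ) i, 0 ≤ p → 0 ≤ q → 0 ≤ e a p q i)
    (hbmul : ∀ i (p q p' q' : ℝ), 0 ≤ p → 0 ≤ q → 0 ≤ p' → 0 ≤ q' →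
      eb p q i * eb p' q' i = eb (p+p') (q+q') i)
    (hbnn : ∀ (p q : ℝ) i, 0 ≤ p → 0 ≤ q → 0 ≤ eb p q i)
    (p₁ p₂ q₁ q₂ : ℝ) (hp₁ : 0 ≤ p₁) (hp₂ : 0 ≤ p₂) (hq₁ : 0 ≤ q₁) (hq₂ : 0 ≤ q₂)
    (hG1 : (cd Wb (eb p₁ p₂) - ∑ a, w a • cd (W a) (e a p₁ p₂)).PosSemidef)
    (hG2 : (cd Wb (eb q₁ q₂) - ∑ a, w a • cd (W a) (e a q₁ q₂)).PosSemidef) :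
    (cd Wb (eb ((p₁+q₁)/2) ((p₂+q₂)/2))
      - ∑ a, w a • cd (W a) (e a ((p₁+q₁)/2) ((p₂+q₂)/2))).PosSemidef := by
  have hp₁2 : 0 ≤ p₁/2 := by positivity
  have hp₂2 : 0 ≤ p₂/2 := by positivity
  have hq₁2 : 0 ≤ q₁/2 := by positivity
  have hq₂2 : 0 ≤ q₂/2 := by positivity
  set m₁ : ℝ := (p₁+q₁)/2 with hm₁
  set m₂ : ℝ := (p₂+q₂)/2 with hm₂
  set G : Matrix k k ℂ := ∑ a, w a • cd (W a) (e a m₁ m₂) with hG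
  have hKh : G.IsHermitian := by
    show Gᴴ = G
    rw [hG, Matrix.conjTranspose_sum]
    exact Finset.sum_congr rfl fun a _ => herm_smul (cd_herm _ _) _
  -- positivity of the summed block form
  have hPsum : ∀ x y, 0 ≤ qf (∑ a, w a • cd (W a) (e a p₁ p₂)) x x + qf G x y + qf G y x
      + qf (∑ a, w a • cd (W a) (e a q₁ q₂)) y y := by
    intro x y
    rw [hG, qf_sum, qf_sum, qf_sum, qf_sum, ← Finset.sum_add_distrib,
      ← Finset.sum_add_distrib, ← Finset.sum_add_distrib]
    refine Finset.sum_nonneg fun a _ => ?_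
    simp only [qf_smul, ← smul_add]
    rw [Complex.real_smul]
    refine mul_nonneg (by exact_mod_cast hw a) ?_
    -- per-α block positivity via qf_expand
    have hexp := qf_expand (cd_herm (W a) (e a (p₁/2) (p₂/2)))
      (cd_herm (W a) (e a (q₁/2) (q₂/2))) x y
    have eRR : cd (W a) (e a (p₁/2) (p₂/2)) * cd (W a) (e a (p₁/2) (p₂/2))
        = cd (W a) (e a p₁ p₂) := by
      rw [cd_mul _ (hW' a)]
      exact cd_congr _ fun i => by
        rw [hmul a i _ _ _ _ hp₁2 hp₂2 hp₁2 hp₂2, add_halves, add_halves]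
    have eRS : cd (W a) (e a (p₁/2) (p₂/2)) * cd (W a) (e a (q₁/2) (q₂/2))
        = cd (W a) (e a m₁ m₂) := by
      rw [cd_mul _ (hW' a)]
      exact cd_congr _ fun i => by
        rw [hmul a i _ _ _ _ hp₁2 hp₂2 hq₁2 hq₂2,
          show p₁/2 + q₁/2 = m₁ from by rw [hm₁]; ring,
          show p₂/2 + q₂/2 = m₂ from by rw [hm₂]; ring]
    have eSR : cd (W a) (e a (q₁/2) (q₂/2)) * cd (W a) (e a (p₁/2) (p₂/2))
        = cd (W a) (e a m₁ m₂) := by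
      rw [cd_mul _ (hW' a)]
      exact cd_congr _ fun i => by
        rw [hmul a i _ _ _ _ hq₁2 hq₂2 hp₁2 hp₂2,
          show q₁/2 + p₁/2 = m₁ from by rw [hm₁]; ring,
          show q₂/2 + p₂/2 = m₂ from by rw [hm₂]; ring]
    have eSS : cd (W a) (e a (q₁/2) (q₂/2)) * cd (W a) (e a (q₁/2) (q₂/2))
        = cd (W a) (e a q₁ q₂) := by
      rw [cd_mul _ (hW' a)]
      exact cd_congr _ fun i => by
        rw [hmul a i _ _ _ _ hq₁2 hq₂2 hq₁2 hq₂2, add_halves, add_halves]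
    rw [eRR, eRS, eSR, eSS] at hexp
    exact hexp
  -- replace averaged ends by the barred ends (monotonicity)
  have hPbig : ∀ x y, 0 ≤ qf (cd Wb (eb p₁ p₂)) x x + qf G x y + qf G y x
      + qf (cd Wb (eb q₁ q₂)) y y := by
    intro x y
    have h1 := qf_nonneg_of_psd hG1 x
    have h2 := qf_nonneg_of_psd hG2 y
    have h0 := hPsum x y
    have e1 : qf (cd Wb (eb p₁ p₂)) x x
        = qf (∑ a, w a • cd (W a) (e a p₁ p₂)) x x
          + qf (cd Wb (eb p₁ p₂) - ∑ a, w a • cd (W a) (e a p₁ p₂)) x x := by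
      rw [qf_sub]; ring
    have e2 : qf (cd Wb (eb q₁ q₂)) y y
        = qf (∑ a, w a • cd (W a) (e a q₁ q₂)) y y
          + qf (cd Wb (eb q₁ q₂) - ∑ a, w a • cd (W a) (e a q₁ q₂)) y y := by
      rw [qf_sub]; ring
    rw [e1, e2]
    calc (0:ℂ) ≤ (qf (∑ a, w a • cd (W a) (e a p₁ p₂)) x x + qf G x y + qf G y x
          + qf (∑ a, w a • cd (W a) (e a q₁ q₂)) y y)
          + qf (cd Wb (eb p₁ p₂) - ∑ a, w a • cd (W a) (e a p₁ p₂)) x x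
          + qf (cd Wb (eb q₁ q₂) - ∑ a, w a • cd (W a) (e a q₁ q₂)) y y :=
          add_nonneg (add_nonneg h0 h1) h2
      _ = _ := by ring
  have happ := key Wb hWb hWb' (eb p₁ p₂) (eb q₁ q₂)
    (fun i => hbnn _ _ i hp₁ hp₂) (fun i => hbnn _ _ i hq₁ hq₂) G hKh hPbig
  have hid : (fun i => Real.sqrt (eb p₁ p₂ i) * Real.sqrt (eb q₁ q₂ i))
      = eb m₁ m₂ := funext fun i => by
    have s1 : Real.sqrt (eb p₁ p₂ i) = eb (p₁/2) (p₂/2) i := by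
      rw [show eb p₁ p₂ i = eb (p₁/2) (p₂/2) i * eb (p₁/2) (p₂/2) i from by
        rw [hbmul i _ _ _ _ hp₁2 hp₂2 hp₁2 hp₂2, add_halves, add_halves]]
      exact Real.sqrt_mul_self (hbnn _ _ i hp₁2 hp₂2)
    have s2 : Real.sqrt (eb q₁ q₂ i) = eb (q₁/2) (q₂/2) i := by
      rw [show eb q₁ q₂ i = eb (q₁/2) (q₂/2) i * eb (q₁/2) (q₂/2) i from by
        rw [hbmul i _ _ _ _ hq₁2 hq₂2 hq₁2 hq₂2, add_halves, add_halves]]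
      exact Real.sqrt_mul_self (hbnn _ _ i hq₁2 hq₂2)
    rw [s1, s2, hbmul i _ _ _ _ hp₁2 hp₂2 hq₁2 hq₂2,
      show p₁/2 + q₁/2 = m₁ from by rw [hm₁]; ring,
      show p₂/2 + q₂/2 = m₂ from by rw [hm₂]; ring]
  rw [hid] at happ
  exact happ
section kron
variable {n m : Type*} [Fintype n] [DecidableEq n] [Fintype m] [DecidableEq m]

lemma star_kron (U : Matrix n n ℂ) (V : Matrix m m ℂ) :
    star (U ⊗ₖ V) = star U ⊗ₖ star V := by
  ext ⟨i1, i2⟩ ⟨j1, j2⟩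
  simp [Matrix.star_eq_conjTranspose, Matrix.conjTranspose_apply, Matrix.kroneckerMap_apply]

lemma sum_kron {ι : Type*} [Fintype ι] (M : ι → Matrix n n ℂ) (B : Matrix m m ℂ) :
    (∑ a, M a) ⊗ₖ B = ∑ a, M a ⊗ₖ B := by
  ext ⟨i1, i2⟩ ⟨j1, j2⟩
  simp [Matrix.kroneckerMap_apply, Matrix.sum_apply, Finset.sum_mul]

lemma kron_sum {ι : Type*} [Fintype ι] (A : Matrix n n ℂ) (M : ι → Matrix m m ℂ) :
    A ⊗ₖ (∑ a, M a) = ∑ a, A ⊗ₖ M a := by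
  ext ⟨i1, i2⟩ ⟨j1, j2⟩
  simp [Matrix.kroneckerMap_apply, Matrix.sum_apply, Finset.mul_sum]

lemma smul_kron (r : ℝ) (A : Matrix n n ℂ) (B : Matrix m m ℂ) :
    (r • A) ⊗ₖ B = r • (A ⊗ₖ B) := by
  ext ⟨i1, i2⟩ ⟨j1, j2⟩
  simp [Matrix.kroneckerMap_apply, smul_mul_assoc]
  ring

lemma kron_smul (r : ℝ) (A : Matrix n n ℂ) (B : Matrix m m ℂ) :
    A ⊗ₖ (r • B) = r • (A ⊗ₖ B) := by
  ext ⟨i1, i2⟩ ⟨j1, j2⟩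
  simp [Matrix.kroneckerMap_apply, mul_smul_comm]
  ring

lemma cd_kron (U : Matrix n n ℂ) (V : Matrix m m ℂ) (μ : n → ℝ) (ν : m → ℝ) :
    (cd U μ) ⊗ₖ (cd V ν) = cd (U ⊗ₖ V) (fun p => μ p.1 * ν p.2) := by
  unfold cd
  rw [star_kron, Matrix.mul_kronecker_mul, Matrix.mul_kronecker_mul,
    Matrix.diagonal_kronecker_diagonal]
  congr 2
  funext p
  push_cast
  rfl

lemma kron_unitary {U : Matrix n n ℂ} {V : Matrix m m ℂ}
    (hU : U * star U = 1) (hV : V * star V = 1) : (U ⊗ₖ V) * star (U ⊗ₖ V) = 1 := by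
  rw [star_kron, ← Matrix.mul_kronecker_mul, hU, hV, Matrix.one_kronecker_one]

lemma kron_unitary' {U : Matrix n n ℂ} {V : Matrix m m ℂ}
    (hU : star U * U = 1) (hV : star V * V = 1) : star (U ⊗ₖ V) * (U ⊗ₖ V) = 1 := by
  rw [star_kron, ← Matrix.mul_kronecker_mul, hU, hV, Matrix.one_kronecker_one]

end kron

end Ando

open Ando

/-- Ando's joint concavity (two factors): for `r₁, r₂ > 0` with `r₁ + r₂ ≤ 1`, the map
`(X,Y) ↦ X^{r₁} ⊗ Y^{r₂}` is jointly concave on positive semidefinite matrices: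
`∑_α λ_α (X_α^{r₁} ⊗ Y_α^{r₂}) ≤ (∑_α λ_α X_α)^{r₁} ⊗ (∑_α λ_α Y_α)^{r₂}`
in the Loewner order. Fractional powers are via functional calculus. -/
theorem ando_joint_concavity
    {ι n m : Type*} [Fintype ι] [Fintype n] [DecidableEq n] [Fintype m] [DecidableEq m]
    (r₁ r₂ : ℝ) (hr₁ : 0 < r₁) (hr₂ : 0 < r₂) (hr : r₁ + r₂ ≤ 1)
    (w : ι → ℝ) (hw : ∀ α, 0 ≤ w α) (hw1 : ∑ α, w α = 1)
    (X : ι → Matrix n n ℂ) (Y : ι → Matrix m m ℂ)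
    (hX : ∀ α, (X α).PosSemidef) (hY : ∀ α, (Y α).PosSemidef)
    (hXs : (∑ α, w α • X α).IsHermitian) (hYs : (∑ α, w α • Y α).IsHermitian) :
    (hXs.cfc (fun t => t ^ r₁) ⊗ₖ hYs.cfc (fun t => t ^ r₂)
      - ∑ α, w α • ((hX α).1.cfc (fun t => t ^ r₁) ⊗ₖ (hY α).1.cfc (fun t => t ^ r₂))).PosSemidef := by
  classical
  have hXsum : (∑ α, w α • X α).PosSemidef := psd_sum _ fun a => psd_smul (hX a) (hw a)
  have hYsum : (∑ α, w α • Y α).PosSemidef := psd_sum _ fun a => psd_smul (hY a) (hw a)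
  set e : ι → ℝ → ℝ → (n × m) → ℝ :=
    fun a p q ij => (hX a).1.eigenvalues ij.1 ^ p * (hY a).1.eigenvalues ij.2 ^ q with he
  set eb : ℝ → ℝ → (n × m) → ℝ :=
    fun p q ij => hXs.eigenvalues ij.1 ^ p * hYs.eigenvalues ij.2 ^ q with heb
  set W : ι → Matrix (n × m) (n × m) ℂ := fun a => evU (hX a).1 ⊗ₖ evU (hY a).1 with hWdef
  set Wb : Matrix (n × m) (n × m) ℂ := evU hXs ⊗ₖ evU hYs with hWbdef
  have hW' : ∀ a, star (W a) * W a = 1 := fun a => kron_unitary' (star_mul_evU _) (star_mul_evU _)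
  have hWb : Wb * star Wb = 1 := kron_unitary (evU_mul_star _) (evU_mul_star _)
  have hWb' : star Wb * Wb = 1 := kron_unitary' (star_mul_evU _) (star_mul_evU _)
  have hXev : ∀ a i, 0 ≤ (hX a).1.eigenvalues i := fun a i => (hX a).eigenvalues_nonneg i
  have hYev : ∀ a j, 0 ≤ (hY a).1.eigenvalues j := fun a j => (hY a).eigenvalues_nonneg j
  have hXbev : ∀ i, 0 ≤ hXs.eigenvalues i := fun i => hXsum.eigenvalues_nonneg i
  have hYbev : ∀ j, 0 ≤ hYs.eigenvalues j := fun j => hYsum.eigenvalues_nonneg j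
  have hmul : ∀ a (i : n × m) (p q p' q' : ℝ), 0 ≤ p → 0 ≤ q → 0 ≤ p' → 0 ≤ q' →
      e a p q i * e a p' q' i = e a (p+p') (q+q') i := by
    intro a i p q p' q' hp hq hp' hq'
    simp only [he]
    rw [Real.rpow_add_of_nonneg (hXev a i.1) hp hp',
      Real.rpow_add_of_nonneg (hYev a i.2) hq hq']
    ring
  have hnn : ∀ a (p q : ℝ) (i : n × m), 0 ≤ p → 0 ≤ q → 0 ≤ e a p q i := by
    intro a p q i _ _
    exact mul_nonneg (Real.rpow_nonneg (hXev a i.1) _) (Real.rpow_nonneg (hYev a i.2) _)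
  have hbmul : ∀ (i : n × m) (p q p' q' : ℝ), 0 ≤ p → 0 ≤ q → 0 ≤ p' → 0 ≤ q' →
      eb p q i * eb p' q' i = eb (p+p') (q+q') i := by
    intro i p q p' q' hp hq hp' hq'
    simp only [heb]
    rw [Real.rpow_add_of_nonneg (hXbev i.1) hp hp',
      Real.rpow_add_of_nonneg (hYbev i.2) hq hq']
    ring
  have hbnn : ∀ (p q : ℝ) (i : n × m), 0 ≤ p → 0 ≤ q → 0 ≤ eb p q i := by
    intro p q i _ _
    exact mul_nonneg (Real.rpow_nonneg (hXbev i.1) _) (Real.rpow_nonneg (hYbev i.2) _)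
  set Good : ℝ → ℝ → Prop := fun p q =>
    (cd Wb (eb p q) - ∑ a, w a • cd (W a) (e a p q)).PosSemidef with hGoodDef
  -- base cases
  have good00 : Good 0 0 := by
    show (cd Wb (eb 0 0) - ∑ a, w a • cd (W a) (e a 0 0)).PosSemidef
    have h1 : cd Wb (eb 0 0) = 1 := by
      rw [show eb 0 0 = fun _ => (1:ℝ) from funext fun ij => by
        simp [heb, Real.rpow_zero]]
      exact cd_one Wb hWb
    have h2 : ∀ a, cd (W a) (e a 0 0) = 1 := by
      intro a
      rw [show e a 0 0 = fun _ => (1:ℝ) from funext fun ij => by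
        simp [he, Real.rpow_zero]]
      exact cd_one (W a) (kron_unitary (evU_mul_star _) (evU_mul_star _))
    simp only [h1, h2]
    rw [← Finset.sum_smul, hw1, one_smul, sub_self]
    exact Matrix.PosSemidef.zero
  have good10 : Good 1 0 := by
    show (cd Wb (eb 1 0) - ∑ a, w a • cd (W a) (e a 1 0)).PosSemidef
    have h1 : cd Wb (eb 1 0) = (∑ α, w α • X α) ⊗ₖ (1 : Matrix m m ℂ) := by
      have hk := cd_kron (evU hXs) (evU hYs) hXs.eigenvalues (fun _ => (1:ℝ))
      rw [cd_one _ (evU_mul_star hYs), ← herm_eq_cd hXs] at hk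
      rw [hWbdef, show eb 1 0 = fun p : n × m => hXs.eigenvalues p.1 * (fun _ => (1:ℝ)) p.2 from
        funext fun ij => by simp [heb, Real.rpow_one, Real.rpow_zero]]
      exact hk.symm
    have h2 : ∀ a, cd (W a) (e a 1 0) = X a ⊗ₖ (1 : Matrix m m ℂ) := by
      intro a
      have hk := cd_kron (evU (hX a).1) (evU (hY a).1) (hX a).1.eigenvalues (fun _ => (1:ℝ))
      rw [cd_one _ (evU_mul_star (hY a).1), ← herm_eq_cd (hX a).1] at hk
      rw [hWdef, show e a 1 0 = fun p : n × m
          => (hX a).1.eigenvalues p.1 * (fun _ => (1:ℝ)) p.2 from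
        funext fun ij => by simp [he, Real.rpow_one, Real.rpow_zero]]
      exact hk.symm
    simp only [h1, h2]
    have h3 : (∑ α, w α • X α) ⊗ₖ (1 : Matrix m m ℂ) = ∑ a, w a • (X a ⊗ₖ (1 : Matrix m m ℂ)) := by
      rw [sum_kron]
      exact Finset.sum_congr rfl fun a _ => smul_kron _ _ _
    rw [h3, sub_self]
    exact Matrix.PosSemidef.zero
  have good01 : Good 0 1 := by
    show (cd Wb (eb 0 1) - ∑ a, w a • cd (W a) (e a 0 1)).PosSemidef
    have h1 : cd Wb (eb 0 1) = (1 : Matrix n n ℂ) ⊗ₖ (∑ α, w α • Y α) := by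
      have hk := cd_kron (evU hXs) (evU hYs) (fun _ => (1:ℝ)) hYs.eigenvalues
      rw [cd_one _ (evU_mul_star hXs), ← herm_eq_cd hYs] at hk
      rw [hWbdef, show eb 0 1 = fun p : n × m => (fun _ => (1:ℝ)) p.1 * hYs.eigenvalues p.2 from
        funext fun ij => by simp [heb, Real.rpow_one, Real.rpow_zero]]
      exact hk.symm
    have h2 : ∀ a, cd (W a) (e a 0 1) = (1 : Matrix n n ℂ) ⊗ₖ Y a := by
      intro a
      have hk := cd_kron (evU (hX a).1) (evU (hY a).1) (fun _ => (1:ℝ)) (hY a).1.eigenvalues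
      rw [cd_one _ (evU_mul_star (hX a).1), ← herm_eq_cd (hY a).1] at hk
      rw [hWdef, show e a 0 1 = fun p : n × m
          => (fun _ => (1:ℝ)) p.1 * (hY a).1.eigenvalues p.2 from
        funext fun ij => by simp [he, Real.rpow_one, Real.rpow_zero]]
      exact hk.symm
    simp only [h1, h2]
    have h3 : (1 : Matrix n n ℂ) ⊗ₖ (∑ α, w α • Y α)
        = ∑ a, w a • ((1 : Matrix n n ℂ) ⊗ₖ Y a) := by
      rw [kron_sum]
      exact Finset.sum_congr rfl fun a _ => kron_smul _ _ _
    rw [h3, sub_self]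
    exact Matrix.PosSemidef.zero
  -- dyadic induction
  have dyadic : ∀ N : ℕ, ∀ a b : ℕ, a + b ≤ 2^N → Good ((a:ℝ)/2^N) ((b:ℝ)/2^N) := by
    intro N
    induction N with
    | zero =>
      intro a b hab
      simp only [pow_zero] at hab
      have hcase : (a = 0 ∧ b = 0) ∨ (a = 1 ∧ b = 0) ∨ (a = 0 ∧ b = 1) := by omega
      rcases hcase with ⟨rfl, rfl⟩ | ⟨rfl, rfl⟩ | ⟨rfl, rfl⟩ <;>
        simp only [Nat.cast_zero, Nat.cast_one, pow_zero, div_one] <;>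
        [exact good00; exact good10; exact good01]
    | succ N ih =>
      intro a b hab
      have hb1 : Good (((a+1)/2 : ℕ) / 2^N : ℝ) (((b/2 : ℕ) : ℝ)/2^N) := by
        apply ih
        have h2N : 2^(N+1) = 2 * 2^N := by ring
        omega
      have hb2 : Good (((a/2 : ℕ) : ℝ)/2^N) ((((b+1)/2 : ℕ) : ℝ)/2^N) := by
        apply ih
        have h2N : 2^(N+1) = 2 * 2^N := by ring
        omega
      have hpos : ∀ c : ℕ, (0:ℝ) ≤ (c:ℝ)/2^N := fun c => by positivity
      have hmid := mid_abstract w hw W hW' Wb hWb hWb' e eb hmul hnn hbmul hbnn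
        _ _ _ _ (hpos _) (hpos _) (hpos _) (hpos _) hb1 hb2
      have hxa : ((((a+1)/2 : ℕ) : ℝ)/2^N + (((a/2 : ℕ)) : ℝ)/2^N)/2 = (a:ℝ)/2^(N+1) := by
        have h3 : ((a+1)/2 : ℕ) + (a/2 : ℕ) = a := by omega
        have h4 : ((((a+1)/2 : ℕ)) : ℝ) + (((a/2 : ℕ)) : ℝ) = (a:ℝ) := by
          exact_mod_cast congrArg (Nat.cast : ℕ → ℝ) h3
        rw [← add_div, h4, pow_succ, div_div]
      have hxb : ((((b/2 : ℕ)) : ℝ)/2^N + ((((b+1)/2 : ℕ)) : ℝ)/2^N)/2 = (b:ℝ)/2^(N+1) := by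
        have h3 : (b/2 : ℕ) + ((b+1)/2 : ℕ) = b := by omega
        have h4 : (((b/2 : ℕ)) : ℝ) + ((((b+1)/2 : ℕ)) : ℝ) = (b:ℝ) := by
          exact_mod_cast congrArg (Nat.cast : ℕ → ℝ) h3
        rw [← add_div, h4, pow_succ, div_div]
      rw [hxa, hxb] at hmid
      exact hmid
  -- dyadic approximating sequences
  set pk : ℕ → ℝ := fun s => ((⌊r₁ * 2^s⌋₊ : ℕ) : ℝ)/2^s with hpk
  set qk : ℕ → ℝ := fun s => ((⌊r₂ * 2^s⌋₊ : ℕ) : ℝ)/2^s with hqk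
  have hGk : ∀ s, Good (pk s) (qk s) := by
    intro s
    apply dyadic s
    have h2s : (0:ℝ) < 2^s := by positivity
    have h1 : ((⌊r₁ * 2^s⌋₊ : ℕ) : ℝ) ≤ r₁ * 2^s := Nat.floor_le (by positivity)
    have h2 : ((⌊r₂ * 2^s⌋₊ : ℕ) : ℝ) ≤ r₂ * 2^s := Nat.floor_le (by positivity)
    have h3 : ((⌊r₁ * 2^s⌋₊ + ⌊r₂ * 2^s⌋₊ : ℕ) : ℝ) ≤ ((2^s : ℕ) : ℝ) := by
      push_cast
      nlinarith
    exact_mod_cast h3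
  have hconv : ∀ (r : ℝ), 0 < r → Tendsto (fun s : ℕ => ((⌊r * 2^s⌋₊ : ℕ) : ℝ)/2^s)
      atTop (𝓝 r) := by
    intro r hrpos
    have hlow : ∀ s : ℕ, r - (1/2)^s ≤ ((⌊r * 2^s⌋₊ : ℕ) : ℝ)/2^s := by
      intro s
      have h2s : (0:ℝ) < 2^s := by positivity
      have h1 : r * 2^s - 1 < ((⌊r * 2^s⌋₊ : ℕ) : ℝ) := Nat.sub_one_lt_floor _
      rw [div_pow, one_pow]
      have h4 : (r - 1/2^s) * 2^s ≤ ((⌊r * 2^s⌋₊ : ℕ) : ℝ) := by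
        have h5 : (r - 1/2^s) * 2^s = r * 2^s - 1 := by field_simp
        rw [h5]
        exact h1.le
      calc r - 1/2^s = ((r - 1/2^s) * 2^s)/2^s := by field_simp
        _ ≤ ((⌊r * 2^s⌋₊ : ℕ) : ℝ)/2^s := by
            gcongr
        _ = _ := rfl
    have hhigh : ∀ s : ℕ, ((⌊r * 2^s⌋₊ : ℕ) : ℝ)/2^s ≤ r := by
      intro s
      have h2s : (0:ℝ) < 2^s := by positivity
      rw [div_le_iff₀ h2s]
      exact Nat.floor_le (by positivity)
    have hlowt : Tendsto (fun s : ℕ => r - (1/2:ℝ)^s) atTop (𝓝 r) := by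
      have h0 : Tendsto (fun s : ℕ => ((1:ℝ)/2)^s) atTop (𝓝 0) := by
        apply tendsto_pow_atTop_nhds_zero_of_lt_one <;> norm_num
      have := (tendsto_const_nhds (x := r) (f := (atTop : Filter ℕ))).sub h0
      rwa [sub_zero] at this
    exact tendsto_of_tendsto_of_tendsto_of_le_of_le hlowt tendsto_const_nhds hlow hhigh
  have hpkt : Tendsto pk atTop (𝓝 r₁) := hconv r₁ hr₁
  have hqkt : Tendsto qk atTop (𝓝 r₂) := hconv r₂ hr₂
  -- pass to the limit
  have hfinal : (cd Wb (eb r₁ r₂) - ∑ a, w a • cd (W a) (e a r₁ r₂)).PosSemidef := by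
    apply psd_limit (fun s => cd Wb (eb (pk s) (qk s)) - ∑ a, w a • cd (W a) (e a (pk s) (qk s)))
    · exact hGk
    · intro i j
      have hterm : ∀ (lam mu : ℝ), 0 ≤ lam → 0 ≤ mu →
          Tendsto (fun s => ((lam ^ pk s * mu ^ qk s : ℝ) : ℂ)) atTop
            (𝓝 ((lam ^ r₁ * mu ^ r₂ : ℝ) : ℂ)) := by
        intro lam mu hlam hmu
        apply (Complex.continuous_ofReal.tendsto _).comp
        exact (Filter.Tendsto.rpow tendsto_const_nhds hpkt (Or.inr hr₁)).mul
          (Filter.Tendsto.rpow tendsto_const_nhds hqkt (Or.inr hr₂))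
      simp only [Matrix.sub_apply, Matrix.sum_apply, Matrix.smul_apply, cd_apply]
      apply Tendsto.sub
      · apply tendsto_finset_sum
        intro l _
        exact (Tendsto.mul tendsto_const_nhds (hterm _ _ (hXbev l.1) (hYbev l.2))).mul
          tendsto_const_nhds
      · apply tendsto_finset_sum
        intro a _
        apply Filter.Tendsto.const_smul _ (w a)
        apply tendsto_finset_sum
        intro l _
        exact (Tendsto.mul tendsto_const_nhds (hterm _ _ (hXev a l.1) (hYev a l.2))).mul
          tendsto_const_nhds
  -- translate back to the cfc formulation
  have hExpr : hXs.cfc (fun t => t ^ r₁) ⊗ₖ hYs.cfc (fun t => t ^ r₂)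
      - ∑ α, w α • ((hX α).1.cfc (fun t => t ^ r₁) ⊗ₖ (hY α).1.cfc (fun t => t ^ r₂))
      = cd Wb (eb r₁ r₂) - ∑ a, w a • cd (W a) (e a r₁ r₂) := by
    congr 1
    · rw [cfc_eq_cd hXs, cfc_eq_cd hYs, cd_kron, hWbdef]
      rfl
    · refine Finset.sum_congr rfl fun a _ => ?_
      rw [cfc_eq_cd (hX a).1, cfc_eq_cd (hY a).1, cd_kron, hWdef]
      rfl
  rw [hExpr]
  exact hfinal
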